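/- arXiv:2112.00310 — 2 statements merged into one kernel-verified Lean document; each statement's English description precedes it below -/
import Mathlib

section
/- The functor T from R-modules to R ⋉ M-modules, defined on objects by T(N) = (N ⊕ M ⊗_R N, (0 0; 1 0)) and on morphisms f by f ⊕ (id_M ⊗ f), is left adjoint to the forgetful functor U which sends an R ⋉ M-module (X, α) to the underlying R-module X. -/
open MulOpposite

/-- `(MN, t)` is the tensor product `M ⊗_R N` of the `R`-bimodule `M` and the left
`R`-module `N`: `t` is bi-additive, `R`-balanced, left-`R`-linear, and universal
among bi-additive `R`-balanced maps out of `M × N`. -/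
def IsTensorProd (R : Type) [Ring R] (M : Type) [AddCommGroup M] [Module R M]
    [Module Rᵐᵒᵖ M] (N : Type) [AddCommGroup N] [Module R N]
    (MN : Type) [AddCommGroup MN] [Module R MN] (t : M → N → MN) : Prop :=
  (∀ m m' n, t (m + m') n = t m n + t m' n) ∧
  (∀ m n n', t m (n + n') = t m n + t m n') ∧
  (∀ (r : R) (m : M) (n : N), t (op r • m) n = t m (r • n)) ∧
  (∀ (r : R) (m : M) (n : N), t (r • m) n = r • t m n) ∧
  (∀ (P : Type) [AddCommGroup P] (g : M → N → P),
    (∀ m m' n, g (m + m') n = g m n + g m' n) →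
    (∀ m n n', g m (n + n') = g m n + g m n') →
    (∀ (r : R) m n, g (op r • m) n = g m (r • n)) →
    ∃! h : MN →+ P, ∀ m n, h (t m n) = g m n)

open TrivSqZeroExt CategoryTheory

open TensorProduct


noncomputable section
variable (R M : Type) [Ring R] [AddCommGroup M] [Module R M] [Module Rᵐᵒᵖ M]
  [SMulCommClass R Rᵐᵒᵖ M]
variable (N : Type) [AddCommGroup N] [Module R N]


/-- The subgroup of relations in `M ⊗[ℤ] N` defining `M ⊗[R] N`. -/
def myRel : Submodule R (M ⊗[ℤ] N) where
  carrier := AddSubgroup.closure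
    {x | ∃ (r : R) (m : M) (n : N), x = (op r • m) ⊗ₜ[ℤ] n - m ⊗ₜ[ℤ] (r • n)}
  add_mem' := add_mem
  zero_mem' := zero_mem _
  smul_mem' := by
    intro c x hx
    induction hx using AddSubgroup.closure_induction with
    | mem y hy =>
      obtain ⟨r, m, n, rfl⟩ := hy
      apply AddSubgroup.subset_closure
      refine ⟨r, c • m, n, ?_⟩
      rw [smul_sub, smul_tmul', smul_tmul', smul_comm]
    | zero => rw [smul_zero]; exact zero_mem _
    | add y z hy hz hy' hz' => rw [smul_add]; exact add_mem hy' hz'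
    | neg y hy hy' => rw [smul_neg]; exact neg_mem hy'

/-- Our noncommutative tensor product `M ⊗[R] N`. -/
abbrev TP : Type := (M ⊗[ℤ] N) ⧸ myRel R M N

instance : AddCommGroup (TP R M N) := Submodule.Quotient.addCommGroup _
instance : Module R (TP R M N) := Submodule.Quotient.module _

/-- The canonical bilinear map. -/
def tQ (m : M) (n : N) : TP R M N := Submodule.Quotient.mk (m ⊗ₜ[ℤ] n)

variable {R M N}

theorem tQ_add_left (m m' : M) (n : N) :
    tQ R M N (m + m') n = tQ R M N m n + tQ R M N m' n := by
  unfold tQ; rw [TensorProduct.add_tmul, Submodule.Quotient.mk_add]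

theorem tQ_add_right (m : M) (n n' : N) :
    tQ R M N m (n + n') = tQ R M N m n + tQ R M N m n' := by
  unfold tQ; rw [TensorProduct.tmul_add, Submodule.Quotient.mk_add]

theorem tQ_balanced (r : R) (m : M) (n : N) :
    tQ R M N (op r • m) n = tQ R M N m (r • n) := by
  unfold tQ
  rw [Submodule.Quotient.eq]
  exact AddSubgroup.subset_closure ⟨r, m, n, rfl⟩

theorem tQ_smul (r : R) (m : M) (n : N) :
    tQ R M N (r • m) n = r • tQ R M N m n := rfl

theorem tQ_zero_left (n : N) : tQ R M N 0 n = 0 := by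
  have h := tQ_add_left (R := R) (M := M) (N := N) 0 0 n
  rw [zero_add] at h
  exact left_eq_add.mp h

theorem tQ_hom_ext {P : Type} [AddCommGroup P] {h h' : TP R M N →+ P}
    (H : ∀ m n, h (tQ R M N m n) = h' (tQ R M N m n)) : h = h' := by
  ext q
  obtain ⟨y, rfl⟩ := Submodule.Quotient.mk_surjective _ q
  induction y using TensorProduct.induction_on with
  | zero => simp
  | tmul m n => exact H m n
  | add a b ha hb => rw [Submodule.Quotient.mk_add, map_add, map_add, ha, hb]

variable {P : Type} [AddCommGroup P]

/-- Package a biadditive map as an `AddMonoidHom` into `AddMonoidHom`s. -/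
def biAdd (g : M → N → P)
    (h1 : ∀ m m' n, g (m + m') n = g m n + g m' n)
    (h2 : ∀ m n n', g m (n + n') = g m n + g m n') : M →+ N →+ P :=
  AddMonoidHom.mk' (fun m => AddMonoidHom.mk' (g m) (h2 m))
    (fun m m' => AddMonoidHom.ext (h1 m m'))

theorem biAdd_zsmul (g : M → N → P) (h1) (h2) (z : ℤ) (m : M) (n : N) :
    biAdd g h1 h2 (z • m) n = biAdd g h1 h2 m (z • n) := by
  show ((biAdd g h1 h2).flip n) (z • m) = (biAdd g h1 h2 m) (z • n)
  rw [map_zsmul, map_zsmul]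
  rfl

/-- Lift a biadditive balanced map to the tensor product `TP`. -/
def tQlift (g : M → N → P)
    (h1 : ∀ m m' n, g (m + m') n = g m n + g m' n)
    (h2 : ∀ m n n', g m (n + n') = g m n + g m n')
    (h3 : ∀ (r : R) m n, g (op r • m) n = g m (r • n)) : TP R M N →+ P :=
  QuotientAddGroup.lift (myRel R M N).toAddSubgroup
    (TensorProduct.liftAddHom (biAdd g h1 h2) (biAdd_zsmul g h1 h2))
    (by
      intro x hx
      rw [AddMonoidHom.mem_ker]
      have hx' : x ∈ AddSubgroup.closure
          {x : M ⊗[ℤ] N | ∃ (r : R) (m : M) (n : N),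
            x = (op r • m) ⊗ₜ[ℤ] n - m ⊗ₜ[ℤ] (r • n)} := hx
      clear hx
      induction hx' using AddSubgroup.closure_induction with
      | mem y hy =>
        obtain ⟨r, m, n, rfl⟩ := hy
        rw [map_sub, TensorProduct.liftAddHom_tmul, TensorProduct.liftAddHom_tmul]
        show g (op r • m) n - g m (r • n) = 0
        rw [h3, sub_self]
      | zero => exact map_zero _
      | add a b ha hb ha' hb' => rw [map_add, ha', hb', add_zero]
      | neg a ha ha' => rw [map_neg, ha', neg_zero])

theorem tQlift_tQ (g : M → N → P) (h1) (h2) (h3) (m : M) (n : N) :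
    tQlift (R := R) g h1 h2 h3 (tQ R M N m n) = g m n := by
  show (TensorProduct.liftAddHom (biAdd g h1 h2) (biAdd_zsmul g h1 h2)) (m ⊗ₜ[ℤ] n) = g m n
  rw [TensorProduct.liftAddHom_tmul]
  rfl

theorem isTensorProd_TP : IsTensorProd R M N (TP R M N) (tQ R M N) := by
  refine ⟨tQ_add_left, tQ_add_right, tQ_balanced, tQ_smul, ?_⟩
  intro P _ g h1 h2 h3
  refine ⟨tQlift g h1 h2 h3, fun m n => tQlift_tQ g h1 h2 h3 m n, ?_⟩
  intro h hh
  exact tQ_hom_ext fun m n => (hh m n).trans (tQlift_tQ g h1 h2 h3 m n).symm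

end

noncomputable section
open TrivSqZeroExt CategoryTheory
variable (R M : Type) [Ring R] [AddCommGroup M] [Module R M] [Module Rᵐᵒᵖ M]
  [SMulCommClass R Rᵐᵒᵖ M]

theorem tQ_zero_right (N : Type) [AddCommGroup N] [Module R N] (m : M) :
    tQ R M N m 0 = 0 := by
  have h := tQ_add_right (R := R) (M := M) (N := N) m 0 0
  rw [zero_add] at h
  exact left_eq_add.mp h

/-- The underlying type of `T(N)`. -/
abbrev TN (N : Type) [AddCommGroup N] [Module R N] : Type := N × TP R M N

section
variable (N : Type) [AddCommGroup N] [Module R N]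

instance : SMul (TrivSqZeroExt R M) (TN R M N) :=
  ⟨fun a x => (a.fst • x.1, a.fst • x.2 + tQ R M N a.snd x.1)⟩

theorem tnsmul_def (a : TrivSqZeroExt R M) (x : TN R M N) :
    a • x = (a.fst • x.1, a.fst • x.2 + tQ R M N a.snd x.1) := rfl

instance : Module (TrivSqZeroExt R M) (TN R M N) where
  one_smul x := by
    rw [tnsmul_def, fst_one, snd_one, tQ_zero_left, one_smul, one_smul, add_zero]
  mul_smul a b x := by
    rw [tnsmul_def, tnsmul_def, tnsmul_def, fst_mul, snd_mul]
    refine Prod.ext (mul_smul _ _ _) ?_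
    show (a.fst * b.fst) • x.2 + tQ R M N (a.fst • b.snd + op b.fst • a.snd) x.1 =
      a.fst • (b.fst • x.2 + tQ R M N b.snd x.1) + tQ R M N a.snd (b.fst • x.1)
    rw [tQ_add_left, tQ_smul, tQ_balanced, mul_smul, smul_add]
    abel
  smul_zero a := by
    rw [tnsmul_def]
    show (a.fst • (0 : N), a.fst • (0 : TP R M N) + tQ R M N a.snd 0) = 0
    rw [smul_zero, smul_zero, tQ_zero_right, add_zero]
    rfl
  smul_add a x y := by
    rw [tnsmul_def, tnsmul_def, tnsmul_def]
    show (a.fst • (x.1 + y.1), a.fst • (x.2 + y.2) + tQ R M N a.snd (x.1 + y.1)) = _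
    rw [tQ_add_right, smul_add, smul_add]
    refine Prod.ext (by rw [Prod.fst_add]) ?_
    rw [Prod.snd_add]
    dsimp only
    abel
  add_smul a b x := by
    rw [tnsmul_def, tnsmul_def, tnsmul_def, fst_add, snd_add, tQ_add_left]
    refine Prod.ext (add_smul _ _ _) ?_
    show (a.fst + b.fst) • x.2 + (tQ R M N a.snd x.1 + tQ R M N b.snd x.1) = _
    rw [Prod.snd_add, add_smul a.fst b.fst x.2]
    dsimp only
    abel
  zero_smul x := by
    rw [tnsmul_def, fst_zero, snd_zero, tQ_zero_left, zero_smul, zero_smul, add_zero]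
    rfl

end

variable {R M}

/-- Functoriality of `TP` in `N`. -/
def TPmap {N N' : Type} [AddCommGroup N] [Module R N] [AddCommGroup N'] [Module R N']
    (f : N →ₗ[R] N') : TP R M N →+ TP R M N' :=
  tQlift (fun m n => tQ R M N' m (f n))
    (fun m m' n => tQ_add_left m m' (f n))
    (fun m n n' => by show tQ R M N' m (f (n + n')) = _; rw [map_add, tQ_add_right])
    (fun r m n => by
      show tQ R M N' (op r • m) (f n) = tQ R M N' m (f (r • n))
      rw [tQ_balanced, ← map_smul])

theorem TPmap_tQ {N N' : Type} [AddCommGroup N] [Module R N] [AddCommGroup N'] [Module R N']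
    (f : N →ₗ[R] N') (m : M) (n : N) : TPmap f (tQ R M N m n) = tQ R M N' m (f n) :=
  tQlift_tQ _ _ _ _ m n

theorem TPmap_smul {N N' : Type} [AddCommGroup N] [Module R N] [AddCommGroup N'] [Module R N']
    (f : N →ₗ[R] N') (r : R) (q : TP R M N) : TPmap f (r • q) = r • TPmap f q := by
  have h := tQ_hom_ext (R := R) (M := M) (N := N)
    (h := (TPmap f).comp (DistribMulAction.toAddMonoidHom (TP R M N) r))
    (h' := (DistribMulAction.toAddMonoidHom (TP R M N') r).comp (TPmap f))
    (fun m n => by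
      show TPmap f (r • tQ R M N m n) = r • TPmap f (tQ R M N m n)
      rw [← tQ_smul, TPmap_tQ, TPmap_tQ, tQ_smul])
  exact DFunLike.congr_fun h q

/-- Functoriality of `TN` in `N`, as a `TrivSqZeroExt R M`-linear map. -/
def TNmap {N N' : Type} [AddCommGroup N] [Module R N] [AddCommGroup N'] [Module R N']
    (f : N →ₗ[R] N') : TN R M N →ₗ[TrivSqZeroExt R M] TN R M N' where
  toFun x := (f x.1, TPmap f x.2)
  map_add' x y := by
    show (f (x.1 + y.1), TPmap f (x.2 + y.2)) = _
    rw [map_add, map_add]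
    rfl
  map_smul' a x := by
    show (f (a.fst • x.1), TPmap f (a.fst • x.2 + tQ R M N a.snd x.1)) =
      a • (⟨f x.1, TPmap f x.2⟩ : TN R M N')
    rw [tnsmul_def, map_add, TPmap_smul, TPmap_tQ, map_smul]

theorem TPmap_id' {N : Type} [AddCommGroup N] [Module R N] (f : N →ₗ[R] N)
    (hf : ∀ n, f n = n) (q : TP R M N) : TPmap f q = q := by
  have h := tQ_hom_ext (R := R) (M := M) (N := N) (h := TPmap f)
    (h' := AddMonoidHom.id _) (fun m n => by rw [TPmap_tQ, hf]; rfl)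
  exact DFunLike.congr_fun h q

theorem TPmap_comp' {N N' N'' : Type} [AddCommGroup N] [Module R N] [AddCommGroup N']
    [Module R N'] [AddCommGroup N''] [Module R N''] (f : N →ₗ[R] N') (g : N' →ₗ[R] N'')
    (h : N →ₗ[R] N'') (hh : ∀ n, h n = g (f n)) (q : TP R M N) :
    TPmap h q = TPmap g (TPmap f q) := by
  have hext := tQ_hom_ext (R := R) (M := M) (N := N) (h := TPmap h)
    (h' := (TPmap g).comp (TPmap f)) (fun m n => by
      show TPmap h (tQ R M N m n) = TPmap g (TPmap f (tQ R M N m n))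
      rw [TPmap_tQ, TPmap_tQ, TPmap_tQ, hh])
  exact DFunLike.congr_fun hext q

variable (R M) in
/-- The functor `T`. -/
def Tfun : ModuleCat.{0} R ⥤ ModuleCat.{0} (TrivSqZeroExt R M) where
  obj N := ModuleCat.of _ (TN R M N)
  map {N N'} f := ModuleCat.ofHom (TNmap f.hom)
  map_id N := by
    refine ModuleCat.hom_ext <| LinearMap.ext fun x => ?_
    exact Prod.ext rfl (TPmap_id' _ (fun n => rfl) x.2)
  map_comp {N N' N''} f g := by
    refine ModuleCat.hom_ext <| LinearMap.ext fun x => ?_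
    exact Prod.ext rfl (TPmap_comp' f.hom g.hom _ (fun n => rfl) x.2)

section Adj

variable {N : Type} [AddCommGroup N] [Module R N] {X : ModuleCat.{0} (TrivSqZeroExt R M)}

/-- The action map associated to `f`. -/
def alphaHom (f : N →ₗ[R] (ModuleCat.restrictScalars (inlHom R M)).obj X) : TP R M N →+ X :=
  tQlift (fun m n => (inr m : TrivSqZeroExt R M) • (f n : X))
    (fun m m' n => by
      show (inr (m + m') : TrivSqZeroExt R M) • (f n : X) = _
      rw [inr_add]
      exact add_smul _ _ _)
    (fun m n n' => by
      show (inr m : TrivSqZeroExt R M) • (f (n + n') : X) = _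
      rw [map_add]
      exact smul_add _ _ _)
    (fun r m n => by
      show (inr (op r • m) : TrivSqZeroExt R M) • (f n : X) = (inr m : _) • (f (r • n) : X)
      have h1 : (f (r • n) : X) = (inl r : TrivSqZeroExt R M) • (f n : X) := f.map_smul r n
      rw [h1, ← mul_smul, inr_mul_inl])

theorem alphaHom_tQ (f : N →ₗ[R] (ModuleCat.restrictScalars (inlHom R M)).obj X) (m : M)
    (n : N) : alphaHom f (tQ R M N m n) = (inr m : TrivSqZeroExt R M) • (f n : X) :=
  tQlift_tQ _ _ _ _ m n

theorem alphaHom_smul (f : N →ₗ[R] (ModuleCat.restrictScalars (inlHom R M)).obj X) (r : R)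
    (q : TP R M N) :
    alphaHom f (r • q) = (inl r : TrivSqZeroExt R M) • (alphaHom f q : X) := by
  have h := tQ_hom_ext (R := R) (M := M) (N := N)
    (h := (alphaHom f).comp (DistribMulAction.toAddMonoidHom (TP R M N) r))
    (h' := (DistribMulAction.toAddMonoidHom X (inl r : TrivSqZeroExt R M)).comp (alphaHom f))
    (fun m n => by
      show alphaHom f (r • tQ R M N m n) = (inl r : TrivSqZeroExt R M) • alphaHom f (tQ R M N m n)
      rw [← tQ_smul, alphaHom_tQ, alphaHom_tQ, ← inl_mul_inr]
      exact mul_smul _ _ _)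
  exact DFunLike.congr_fun h q

theorem alphaHom_inr (f : N →ₗ[R] (ModuleCat.restrictScalars (inlHom R M)).obj X) (m : M)
    (q : TP R M N) : (inr m : TrivSqZeroExt R M) • (alphaHom f q : X) = 0 := by
  have h := tQ_hom_ext (R := R) (M := M) (N := N)
    (h := (DistribMulAction.toAddMonoidHom X (inr m : TrivSqZeroExt R M)).comp (alphaHom f))
    (h' := 0)
    (fun m' n => by
      show (inr m : TrivSqZeroExt R M) • alphaHom f (tQ R M N m' n) = 0
      rw [alphaHom_tQ]
      erw [← mul_smul, inr_mul_inr, zero_smul])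
  exact DFunLike.congr_fun h q

/-- `f`, retyped as an additive map into `X`. -/
def resMap (f : N →ₗ[R] (ModuleCat.restrictScalars (inlHom R M)).obj X) : N →+ X :=
  AddMonoidHom.mk' (fun n => f n) (fun a b => map_add f a b)

theorem resMap_smul (f : N →ₗ[R] (ModuleCat.restrictScalars (inlHom R M)).obj X) (r : R)
    (n : N) : resMap f (r • n) = (inl r : TrivSqZeroExt R M) • resMap f n :=
  f.map_smul r n

/-- Backward direction of the hom equivalence. -/
def backMap (f : N →ₗ[R] (ModuleCat.restrictScalars (inlHom R M)).obj X) :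
    TN R M N →ₗ[TrivSqZeroExt R M] X where
  toFun x := resMap f x.1 + alphaHom f x.2
  map_add' x y := by
    show resMap f (x.1 + y.1) + alphaHom f (x.2 + y.2) = _
    rw [map_add, map_add]
    show _ = (resMap f x.1 + alphaHom f x.2) + (resMap f y.1 + alphaHom f y.2)
    abel
  map_smul' a x := by
    show resMap f (a.fst • x.1) + alphaHom f (a.fst • x.2 + tQ R M N a.snd x.1) =
      a • (resMap f x.1 + alphaHom f x.2)
    rw [resMap_smul, map_add, alphaHom_smul, alphaHom_tQ]
    show _ + ((inl a.fst : TrivSqZeroExt R M) • alphaHom f x.2 +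
      (inr a.snd : TrivSqZeroExt R M) • resMap f x.1) = _
    conv_rhs => rw [← inl_fst_add_inr_snd_eq a]
    rw [add_smul, smul_add, smul_add, alphaHom_inr, add_zero]
    abel

/-- Forward direction of the hom equivalence. -/
def fwdMap (g : TN R M N →ₗ[TrivSqZeroExt R M] X) :
    N →ₗ[R] (ModuleCat.restrictScalars (inlHom R M)).obj X where
  toFun n := g ((n, 0) : TN R M N)
  map_add' n n' := by
    have h : ((n + n', 0) : TN R M N) = ((n, 0) : TN R M N) + ((n', 0) : TN R M N) := by
      rw [Prod.mk_add_mk, add_zero]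
    show g ((n + n', 0) : TN R M N) = g ((n, 0) : TN R M N) + g ((n', 0) : TN R M N)
    rw [h, map_add]
  map_smul' r n := by
    have h : ((r • n, 0) : TN R M N) = (inl r : TrivSqZeroExt R M) • ((n, 0) : TN R M N) := by
      rw [tnsmul_def, fst_inl, snd_inl, tQ_zero_left, smul_zero, add_zero]
    show g ((r • n, 0) : TN R M N) = (inlHom R M r) • g ((n, 0) : TN R M N)
    rw [h, map_smul]
    rfl

theorem alphaHom_fwdMap (g : TN R M N →ₗ[TrivSqZeroExt R M] X) (q : TP R M N) :
    alphaHom (fwdMap g) q = g ((0, q) : TN R M N) := by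
  have jadd : ∀ q q' : TP R M N,
      ((0, q + q') : TN R M N) = ((0, q) : TN R M N) + ((0, q') : TN R M N) := by
    intro q q'
    rw [Prod.mk_add_mk, add_zero]
  have h := tQ_hom_ext (R := R) (M := M) (N := N)
    (h := alphaHom (fwdMap g))
    (h' := g.toAddMonoidHom.comp (AddMonoidHom.mk' (fun q => ((0, q) : TN R M N)) jadd))
    (fun m n => by
      show alphaHom (fwdMap g) (tQ R M N m n) = g ((0, tQ R M N m n) : TN R M N)
      have h2 : ((0, tQ R M N m n) : TN R M N) =
          (inr m : TrivSqZeroExt R M) • ((n, 0) : TN R M N) := by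
        rw [tnsmul_def, fst_inr, snd_inr, zero_smul, smul_zero, zero_add]
      rw [alphaHom_tQ, h2, map_smul]
      rfl)
  exact DFunLike.congr_fun h q

end Adj

variable (R M) in
/-- The adjunction `T ⊣ U`. -/
def theAdj : Tfun R M ⊣ ModuleCat.restrictScalars (inlHom R M) :=
  Adjunction.mkOfHomEquiv
  { homEquiv := fun N X =>
    { toFun := fun g => ConcreteCategory.ofHom (C := ModuleCat R) (fwdMap g.hom)
      invFun := fun f => ConcreteCategory.ofHom (C := ModuleCat (TrivSqZeroExt R M)) (backMap f.hom)
      left_inv := fun g => by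
        refine ModuleCat.hom_ext <| LinearMap.ext fun x => ?_
        show (g.hom ((x.1, 0) : TN R M ↑N) : X) + alphaHom (fwdMap g.hom) x.2 = g.hom x
        erw [alphaHom_fwdMap]
        have h2 : ((x.1, 0) : TN R M ↑N) + ((0, x.2) : TN R M ↑N) = x := by
          rw [Prod.mk_add_mk, add_zero, zero_add]
          rfl
        conv_rhs => rw [← h2]
        refine (map_add g.hom _ _).symm.trans ?_
        rfl
      right_inv := fun f => by
        refine ModuleCat.hom_ext <| LinearMap.ext fun n => ?_
        show resMap f.hom n + alphaHom f.hom 0 = f.hom n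
        rw [map_zero, add_zero]
        rfl }
    homEquiv_naturality_left_symm := fun {N N' X} f g => by
      refine ModuleCat.hom_ext <| LinearMap.ext fun x => ?_
      show resMap (f ≫ g).hom x.1 + alphaHom (f ≫ g).hom x.2 =
        resMap g.hom (TNmap f.hom x).1 + alphaHom g.hom (TNmap f.hom x).2
      congr 1
      have h := tQ_hom_ext (R := R) (M := M) (N := ↑N)
        (h := alphaHom (f ≫ g).hom)
        (h' := (alphaHom g.hom).comp (TPmap f.hom))
        (fun m n => by
          show alphaHom (f ≫ g).hom (tQ R M ↑N m n) = alphaHom g.hom (TPmap f.hom (tQ R M ↑N m n))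
          rw [alphaHom_tQ, TPmap_tQ, alphaHom_tQ]
          rfl)
      exact DFunLike.congr_fun h x.2
    homEquiv_naturality_right := fun {N X X'} g h => by
      refine ModuleCat.hom_ext <| LinearMap.ext fun n => ?_
      rfl }
end

/-- The functor `T : R-Mod → (R ⋉ M)-Mod`, defined on objects by
`T(N) = (N ⊕ M ⊗_R N, (0 0; 1 0))` and on morphisms by `f ⊕ (id_M ⊗ f)`, is left
adjoint to the forgetful functor `U` sending an `R ⋉ M`-module `(X, α)` to the
underlying `R`-module `X` (restriction of scalars along `r ↦ (r, 0)`). -/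
theorem T_left_adjoint_to_U (R M : Type) [Ring R] [AddCommGroup M] [Module R M]
    [Module Rᵐᵒᵖ M] [SMulCommClass R Rᵐᵒᵖ M] :
    ∃ T : ModuleCat.{0} R ⥤ ModuleCat.{0} (TrivSqZeroExt R M),
      Nonempty (T ⊣ ModuleCat.restrictScalars (inlHom R M)) ∧
      ∀ (N : ModuleCat.{0} R) (MN : Type) [AddCommGroup MN] [Module R MN]
        (t : M → N → MN), IsTensorProd R M N MN t →
        ∃ e : ((ModuleCat.restrictScalars (inlHom R M)).obj (T.obj N)) ≃ₗ[R] (N × MN),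
          ∀ (m : M) (x : (T.obj N : Type)),
            e ((inr m : TrivSqZeroExt R M) • x) = (0, t m (e x).1) := by
  refine ⟨Tfun R M, ⟨theAdj R M⟩, ?_⟩
  intro N MN _ _ t hT
  obtain ⟨h1, h2, h3, h4, h5⟩ := hT
  set φ : TP R M ↑N →+ MN := tQlift t h1 h2 h3 with hφ
  have hφtQ : ∀ m n, φ (tQ R M ↑N m n) = t m n := fun m n => tQlift_tQ t h1 h2 h3 m n
  obtain ⟨ψ, hψ, hψu⟩ := h5 (TP R M ↑N) (tQ R M ↑N) tQ_add_left tQ_add_right tQ_balanced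
  obtain ⟨idm, hidm, hidu⟩ := h5 MN t h1 h2 h3
  have hcomp1 : φ.comp ψ = AddMonoidHom.id MN := by
    have e1 := hidu (φ.comp ψ) (fun m n => by
      show φ (ψ (t m n)) = t m n
      rw [hψ, hφtQ])
    have e2 := hidu (AddMonoidHom.id MN) (fun m n => rfl)
    exact e1.trans e2.symm
  have hcomp2 : ψ.comp φ = AddMonoidHom.id (TP R M ↑N) :=
    tQ_hom_ext (fun m n => by
      show ψ (φ (tQ R M ↑N m n)) = tQ R M ↑N m n
      rw [hφtQ, hψ])
  have hφsmul : ∀ (r : R) (q : TP R M ↑N), φ (r • q) = r • φ q := by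
    intro r q
    have h := tQ_hom_ext (R := R) (M := M) (N := ↑N)
      (h := φ.comp (DistribMulAction.toAddMonoidHom (TP R M ↑N) r))
      (h' := (DistribMulAction.toAddMonoidHom MN r).comp φ)
      (fun m n => by
        show φ (r • tQ R M ↑N m n) = r • φ (tQ R M ↑N m n)
        rw [← tQ_smul, hφtQ, hφtQ, h4])
    exact DFunLike.congr_fun h q
  refine ⟨{ toFun := fun x => (x.1, φ x.2)
            map_add' := fun x y => by
              show ((x.1 + y.1 : ↑N), φ (x.2 + y.2)) = (x.1, φ x.2) + (y.1, φ y.2)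
              rw [map_add, Prod.mk_add_mk]
            map_smul' := fun r x => by
              show (((inl r : TrivSqZeroExt R M) • x : TN R M ↑N).1,
                  φ (((inl r : TrivSqZeroExt R M) • x : TN R M ↑N).2)) =
                (r • x.1, r • φ x.2)
              erw [tnsmul_def, fst_inl, snd_inl, tQ_zero_left, add_zero]
              rw [hφsmul]
            invFun := fun y => (y.1, ψ y.2)
            left_inv := fun x => Prod.ext rfl (DFunLike.congr_fun hcomp2 x.2)
            right_inv := fun y => Prod.ext rfl (DFunLike.congr_fun hcomp1 y.2) }, ?_⟩
  intro m x
  show (((inr m : TrivSqZeroExt R M) • x : TN R M ↑N).1,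
      φ (((inr m : TrivSqZeroExt R M) • x : TN R M ↑N).2)) = (0, t m x.1)
  erw [tnsmul_def, fst_inr, snd_inr, zero_smul, zero_smul, zero_add, hφtQ]
end

section
/- Let A be a finite dimensional algebra over a field K, M a finite dimensional A-bimodule, and Λ = A ⋉ M the trivial extension. For any finite dimensional A-module N, the number of pairwise non-isomorphic indecomposable direct summands of T(N) equals that of N. In particular, Λ and A have the same number of non-isomorphic indecomposable projective modules. -/
open MulOpposite

/-- The number of pairwise non-isomorphic indecomposable direct summands of a module:
the cardinality of the set of isomorphism classes of submodules that are direct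
summands and are indecomposable. -/
noncomputable def numIndecSummands (A : Type) [Ring A] (N : Type) [AddCommGroup N]
    (i : Module A N) : ℕ := by
  letI := i
  exact Nat.card (Quot (fun (P Q : {P : Submodule A N //
      (∃ P' : Submodule A N, IsCompl P P') ∧ P ≠ ⊥ ∧
      ∀ p q : Submodule A ↥P, IsCompl p q → p = ⊥ ∨ q = ⊥}) =>
    Nonempty (↥P.1 ≃ₗ[A] ↥Q.1)))

open TrivSqZeroExt


section GeneralHelpers

variable {R V W : Type} [Ring R] [AddCommGroup V] [Module R V] [AddCommGroup W] [Module R W]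

private lemma idem_isCompl (f : V →ₗ[R] V) (hf : ∀ x, f (f x) = f x) :
    IsCompl (LinearMap.range f) (LinearMap.ker f) := by
  constructor
  · rw [disjoint_iff_inf_le]
    rintro x ⟨⟨y, rfl⟩, hx⟩
    rw [SetLike.mem_coe, LinearMap.mem_ker, hf] at hx
    simp [hx]
  · rw [codisjoint_iff_le_sup]
    intro x _
    refine Submodule.mem_sup.2 ⟨f x, ⟨x, rfl⟩, x - f x, ?_, by abel⟩
    rw [LinearMap.mem_ker, map_sub, hf, sub_self]

private lemma idem_trivial (hV : ∀ p q : Submodule R V, IsCompl p q → p = ⊥ ∨ q = ⊥)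
    (f : V →ₗ[R] V) (hf : ∀ x, f (f x) = f x) : (∀ x, f x = 0) ∨ (∀ x, f x = x) := by
  rcases hV _ _ (idem_isCompl f hf) with h | h
  · left
    intro x
    have : f x ∈ LinearMap.range f := ⟨x, rfl⟩
    rw [h] at this
    simpa using this
  · right
    intro x
    have : x - f x ∈ LinearMap.ker f := by rw [LinearMap.mem_ker, map_sub, hf, sub_self]
    rw [h] at this
    have h2 := (Submodule.mem_bot R).1 this
    exact (sub_eq_zero.1 h2).symm

private lemma indec_transfer (e : V ≃ₗ[R] W)
    (hV : ∀ p q : Submodule R V, IsCompl p q → p = ⊥ ∨ q = ⊥) :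
    ∀ p q : Submodule R W, IsCompl p q → p = ⊥ ∨ q = ⊥ := by
  intro p q hpq
  have hb : ∀ s : Submodule R W, Submodule.map (e.symm : W →ₗ[R] V) s = ⊥ → s = ⊥ := by
    intro s hs
    rw [Submodule.eq_bot_iff] at hs ⊢
    intro x hx
    have h1 : e.symm x = 0 := hs (e.symm x) ⟨x, hx, rfl⟩
    rwa [LinearEquiv.map_eq_zero_iff] at h1
  rcases hV _ _ ((Submodule.orderIsoMapComap (e.symm : W ≃ₗ[R] V)).isCompl hpq) with h | h
  · exact Or.inl (hb _ h)
  · exact Or.inr (hb _ h)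

private lemma nebot_transfer {X₁ : Submodule R V} {X₂ : Submodule R W}
    (e : ↥X₁ ≃ₗ[R] ↥X₂) (h : X₁ ≠ ⊥) : X₂ ≠ ⊥ := by
  obtain ⟨x, hx, hx0⟩ := Submodule.ne_bot_iff _ |>.1 h
  refine Submodule.ne_bot_iff _ |>.2 ⟨e ⟨x, hx⟩, Submodule.coe_mem _, ?_⟩
  intro h0
  have : e ⟨x, hx⟩ = 0 := Subtype.ext h0
  rw [LinearEquiv.map_eq_zero_iff] at this
  exact hx0 (congrArg Subtype.val this)

end GeneralHelpers

section TensorHelpers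
set_option linter.unusedSectionVars false

variable {A M N MN : Type} [Ring A]
  [AddCommGroup M] [Module A M] [Module Aᵐᵒᵖ M] [SMulCommClass A Aᵐᵒᵖ M]
  [AddCommGroup N] [Module A N] [AddCommGroup MN] [Module A MN]
  {t : M → N → MN}

private lemma t_ext (ht : IsTensorProd A M N MN t) {P : Type} [AddCommGroup P]
    (h1 h2 : MN →+ P) (H : ∀ m n, h1 (t m n) = h2 (t m n)) : ∀ x, h1 x = h2 x := by
  obtain ⟨h, -, hu⟩ := ht.2.2.2.2 P (fun m n => h1 (t m n))
    (fun m m' n => by rw [ht.1, map_add])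
    (fun m n n' => by rw [ht.2.1, map_add])
    (fun r m n => by rw [ht.2.2.1])
  have e1 : h1 = h := hu h1 fun m n => rfl
  have e2 : h2 = h := hu h2 fun m n => (H m n).symm
  intro x; rw [e1, e2]

private lemma t_zero_left (ht : IsTensorProd A M N MN t) (n : N) : t 0 n = 0 := by
  have h := ht.1 0 0 n
  rw [add_zero] at h
  have h2 : t 0 n + 0 = t 0 n + t 0 n := by rw [add_zero]; exact h
  exact (add_left_cancel h2).symm

private lemma t_zero_right (ht : IsTensorProd A M N MN t) (m : M) : t m 0 = 0 := by
  have h := ht.2.1 m 0 0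
  rw [add_zero] at h
  have h2 : t m 0 + 0 = t m 0 + t m 0 := by rw [add_zero]; exact h
  exact (add_left_cancel h2).symm

private lemma lift_exists (ht : IsTensorProd A M N MN t) (g : N →ₗ[A] N) :
    ∃ h : MN →ₗ[A] MN, ∀ m n, h (t m n) = t m (g n) := by
  obtain ⟨h, hh, -⟩ := ht.2.2.2.2 MN (fun m n => t m (g n))
    (fun m m' n => ht.1 m m' (g n))
    (fun m n n' => by rw [map_add, ht.2.1])
    (fun r m n => by rw [map_smul]; exact ht.2.2.1 r m (g n))
  refine ⟨{ toFun := h, map_add' := h.map_add, map_smul' := ?_ }, hh⟩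
  intro r x
  exact t_ext ht (h.comp (DistribMulAction.toAddMonoidHom MN r))
    ((DistribMulAction.toAddMonoidHom MN r).comp h)
    (fun m n => by
      simp only [AddMonoidHom.comp_apply, DistribMulAction.toAddMonoidHom_apply]
      rw [← ht.2.2.2.1, hh, hh, ht.2.2.2.1]) x

private noncomputable def liftL (ht : IsTensorProd A M N MN t) (g : N →ₗ[A] N) :
    MN →ₗ[A] MN := (lift_exists ht g).choose

private lemma liftL_t (ht : IsTensorProd A M N MN t) (g : N →ₗ[A] N) (m : M) (n : N) :
    liftL ht g (t m n) = t m (g n) := (lift_exists ht g).choose_spec m n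

private lemma liftL_lift (ht : IsTensorProd A M N MN t) (g g' : N →ₗ[A] N) (x : MN) :
    liftL ht g (liftL ht g' x) = liftL ht (g ∘ₗ g') x :=
  t_ext ht (((liftL ht g).comp (liftL ht g')).toAddMonoidHom)
    ((liftL ht (g ∘ₗ g')).toAddMonoidHom)
    (fun m n => by simp [liftL_t]) x

private lemma liftL_congr (ht : IsTensorProd A M N MN t) (g g' : N →ₗ[A] N)
    (h : ∀ n, g n = g' n) (x : MN) : liftL ht g x = liftL ht g' x :=
  t_ext ht ((liftL ht g).toAddMonoidHom) ((liftL ht g').toAddMonoidHom)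
    (fun m n => by simp [liftL_t, h]) x

private lemma liftL_id (ht : IsTensorProd A M N MN t) (x : MN) :
    liftL ht (LinearMap.id : N →ₗ[A] N) x = x :=
  t_ext ht ((liftL ht LinearMap.id).toAddMonoidHom) (AddMonoidHom.id MN)
    (fun m n => by simp [liftL_t]) x

private def spanT (t : M → N → MN) (P : Submodule A N) : Submodule A MN :=
  Submodule.span A {x | ∃ m, ∃ p ∈ P, t m p = x}

private lemma mem_spanT (P : Submodule A N) (m : M) {p : N} (hp : p ∈ P) :
    t m p ∈ spanT t P := Submodule.subset_span ⟨m, p, hp, rfl⟩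

private lemma liftL_mem (ht : IsTensorProd A M N MN t) (g : N →ₗ[A] N) (P : Submodule A N)
    (hg : ∀ n, g n ∈ P) (x : MN) : liftL ht g x ∈ spanT t P := by
  have h := t_ext ht ((spanT t P).mkQ.toAddMonoidHom.comp (liftL ht g).toAddMonoidHom) 0
    (fun m n => by
      simp only [AddMonoidHom.comp_apply, LinearMap.toAddMonoidHom_coe, AddMonoidHom.zero_apply]
      rw [liftL_t]
      exact (Submodule.Quotient.mk_eq_zero _).2 (mem_spanT P m (hg n))) x
  simp only [AddMonoidHom.comp_apply, LinearMap.toAddMonoidHom_coe,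
    AddMonoidHom.zero_apply] at h
  exact (Submodule.Quotient.mk_eq_zero _).1 h

private lemma liftL_eq_on (ht : IsTensorProd A M N MN t) (g g' : N →ₗ[A] N)
    (P : Submodule A N) (hgg : ∀ p ∈ P, g p = g' p) :
    ∀ y ∈ spanT t P, liftL ht g y = liftL ht g' y := by
  intro y hy
  induction hy using Submodule.span_induction with
  | mem x hx =>
    obtain ⟨m, p, hp, rfl⟩ := hx
    rw [liftL_t, liftL_t, hgg p hp]
  | zero => simp
  | add u v _ _ h1 h2 => simp [map_add, h1, h2]
  | smul a u _ h => simp [map_smul, h]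

private lemma liftL_fix (ht : IsTensorProd A M N MN t) (g : N →ₗ[A] N)
    (P : Submodule A N) (hg : ∀ p ∈ P, g p = p) :
    ∀ y ∈ spanT t P, liftL ht g y = y := by
  intro y hy
  rw [liftL_eq_on ht g LinearMap.id P (fun p hp => by simpa using hg p hp) y hy, liftL_id]

private lemma liftL_zero_on (ht : IsTensorProd A M N MN t) (g : N →ₗ[A] N)
    (P : Submodule A N) (hg : ∀ p ∈ P, g p = 0) :
    ∀ y ∈ spanT t P, liftL ht g y = 0 := by
  intro y hy
  rw [liftL_eq_on ht g 0 P (fun p hp => by simpa using hg p hp) y hy]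
  exact t_ext ht ((liftL ht 0).toAddMonoidHom) 0
    (fun m n => by simp [liftL_t, t_zero_right ht]) y

end TensorHelpers


section LambdaHelpers
set_option linter.unusedSectionVars false

variable {A M N MN : Type} [Ring A]
  [AddCommGroup M] [Module A M] [Module Aᵐᵒᵖ M] [SMulCommClass A Aᵐᵒᵖ M]
  [AddCommGroup N] [Module A N] [AddCommGroup MN] [Module A MN]
  {t : M → N → MN}
  [instTN : Module (TrivSqZeroExt A M) (N × MN)]

private lemma inl_smul' (ht : IsTensorProd A M N MN t)
    (hTN : ∀ (q : TrivSqZeroExt A M) (x : N × MN),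
      q • x = (q.fst • x.1, q.fst • x.2 + t q.snd x.1))
    (a : A) (x : N × MN) : (inl a : TrivSqZeroExt A M) • x = (a • x.1, a • x.2) := by
  rw [hTN]
  simp [t_zero_left ht]

private lemma inr_smul' (hTN : ∀ (q : TrivSqZeroExt A M) (x : N × MN),
      q • x = (q.fst • x.1, q.fst • x.2 + t q.snd x.1))
    (m : M) (x : N × MN) : (inr m : TrivSqZeroExt A M) • x = (0, t m x.1) := by
  rw [hTN]
  simp

private noncomputable def TmapL (ht : IsTensorProd A M N MN t)
    (hTN : ∀ (q : TrivSqZeroExt A M) (x : N × MN),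
      q • x = (q.fst • x.1, q.fst • x.2 + t q.snd x.1))
    (g : N →ₗ[A] N) : (N × MN) →ₗ[TrivSqZeroExt A M] (N × MN) where
  toFun v := (g v.1, liftL ht g v.2)
  map_add' u v := by simp [Prod.ext_iff]
  map_smul' q v := by
    dsimp only [RingHom.id_apply]
    rw [hTN q v, hTN q (g v.1, liftL ht g v.2)]
    refine Prod.ext (by simp) ?_
    simp [map_add, liftL_t, map_smul]

private lemma TmapL_apply (ht : IsTensorProd A M N MN t)
    (hTN : ∀ (q : TrivSqZeroExt A M) (x : N × MN),
      q • x = (q.fst • x.1, q.fst • x.2 + t q.snd x.1))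
    (g : N →ₗ[A] N) (v : N × MN) : TmapL ht hTN g v = (g v.1, liftL ht g v.2) := rfl

private def SP (hTN : ∀ (q : TrivSqZeroExt A M) (x : N × MN),
      q • x = (q.fst • x.1, q.fst • x.2 + t q.snd x.1))
    (P : Submodule A N) : Submodule (TrivSqZeroExt A M) (N × MN) where
  carrier := {v | v.1 ∈ P ∧ v.2 ∈ spanT t P}
  add_mem' ha hb := ⟨add_mem ha.1 hb.1, add_mem ha.2 hb.2⟩
  zero_mem' := ⟨zero_mem _, zero_mem _⟩
  smul_mem' q v hv := by
    rw [hTN]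
    exact ⟨Submodule.smul_mem _ _ hv.1,
      add_mem (Submodule.smul_mem _ _ hv.2) (mem_spanT P q.snd hv.1)⟩

private lemma mem_SP {hTN : ∀ (q : TrivSqZeroExt A M) (x : N × MN),
      q • x = (q.fst • x.1, q.fst • x.2 + t q.snd x.1)}
    {P : Submodule A N} {v : N × MN} :
    v ∈ SP hTN P ↔ v.1 ∈ P ∧ v.2 ∈ spanT t P := Iff.rfl

private lemma vP_mem {hTN : ∀ (q : TrivSqZeroExt A M) (x : N × MN),
      q • x = (q.fst • x.1, q.fst • x.2 + t q.snd x.1)}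
    {P : Submodule A N} {p : N} (hp : p ∈ P) :
    ((p, 0) : N × MN) ∈ SP hTN P := ⟨hp, zero_mem _⟩

private lemma TmapL_mem (ht : IsTensorProd A M N MN t)
    (hTN : ∀ (q : TrivSqZeroExt A M) (x : N × MN),
      q • x = (q.fst • x.1, q.fst • x.2 + t q.snd x.1))
    (g : N →ₗ[A] N) (Q : Submodule A N) (hg : ∀ n, g n ∈ Q) (v : N × MN) :
    TmapL ht hTN g v ∈ SP hTN Q := ⟨hg _, liftL_mem ht g Q hg _⟩

private lemma TmapL_fix (ht : IsTensorProd A M N MN t)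
    (hTN : ∀ (q : TrivSqZeroExt A M) (x : N × MN),
      q • x = (q.fst • x.1, q.fst • x.2 + t q.snd x.1))
    (g : N →ₗ[A] N) (P : Submodule A N) (hg : ∀ p ∈ P, g p = p)
    (v : N × MN) (hv : v ∈ SP hTN P) : TmapL ht hTN g v = v :=
  Prod.ext (hg _ hv.1) (liftL_fix ht g P hg _ hv.2)

private lemma endo_decomp (ht : IsTensorProd A M N MN t)
    (hTN : ∀ (q : TrivSqZeroExt A M) (x : N × MN),
      q • x = (q.fst • x.1, q.fst • x.2 + t q.snd x.1))
    (E : (N × MN) →ₗ[TrivSqZeroExt A M] (N × MN)) :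
    ∃ (a : N →ₗ[A] N) (c : N →ₗ[A] MN),
      ∀ v : N × MN, E v = (a v.1, c v.1 + liftL ht a v.2) := by
  have hsm : ∀ (r : A) (n : N), ((r • n : N), (0 : MN)) = (inl r : TrivSqZeroExt A M) • ((n : N), (0 : MN)) := by
    intro r n
    rw [inl_smul' ht hTN]
    simp
  have hadd : ∀ (n n' : N), ((n + n' : N), (0 : MN)) = ((n : N), (0 : MN)) + (n', (0 : MN)) := by
    intro n n'; simp
  let a : N →ₗ[A] N :=
    { toFun := fun n => (E (n, 0)).1
      map_add' := fun n n' => by rw [hadd, map_add]; rfl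
      map_smul' := fun r n => by
        dsimp only [RingHom.id_apply]
        rw [hsm, map_smul, inl_smul' ht hTN] }
  let c : N →ₗ[A] MN :=
    { toFun := fun n => (E (n, 0)).2
      map_add' := fun n n' => by rw [hadd, map_add]; rfl
      map_smul' := fun r n => by
        dsimp only [RingHom.id_apply]
        rw [hsm, map_smul, inl_smul' ht hTN] }
  refine ⟨a, c, ?_⟩
  have key1 : ∀ x : MN, (E (0, x)).1 = 0 := by
    refine t_ext ht
      { toFun := fun x => (E ((0 : N), x)).1
        map_zero' := by rw [show ((0:N), (0:MN)) = (0 : N × MN) from rfl, map_zero]; rfl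
        map_add' := fun x y => by
          rw [show ((0:N), x + y) = (((0:N), x) + ((0:N), y) : N × MN) by simp, map_add]; rfl }
      0 (fun m n => ?_)
    have h1 : ((0 : N), t m n) = (inr m : TrivSqZeroExt A M) • ((n : N), (0 : MN)) := by
      rw [inr_smul' hTN]
    dsimp only [AddMonoidHom.coe_mk, ZeroHom.coe_mk, AddMonoidHom.zero_apply]
    rw [h1, map_smul, inr_smul' hTN]
  have key2 : ∀ x : MN, (E (0, x)).2 = liftL ht a x := by
    refine t_ext ht
      { toFun := fun x => (E ((0 : N), x)).2
        map_zero' := by rw [show ((0:N), (0:MN)) = (0 : N × MN) from rfl, map_zero]; rfl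
        map_add' := fun x y => by
          rw [show ((0:N), x + y) = (((0:N), x) + ((0:N), y) : N × MN) by simp, map_add]; rfl }
      (liftL ht a).toAddMonoidHom (fun m n => ?_)
    have h1 : ((0 : N), t m n) = (inr m : TrivSqZeroExt A M) • ((n : N), (0 : MN)) := by
      rw [inr_smul' hTN]
    dsimp only [AddMonoidHom.coe_mk, ZeroHom.coe_mk, LinearMap.toAddMonoidHom_coe]
    rw [h1, map_smul, inr_smul' hTN, liftL_t]
    rfl
  intro v
  have hv : (v : N × MN) = (v.1, 0) + (0, v.2) := by simp
  conv_lhs => rw [hv, map_add]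
  refine Prod.ext ?_ ?_
  · show (E (v.1, 0) + E (0, v.2)).1 = a v.1
    rw [Prod.fst_add, key1, add_zero]
    rfl
  · show (E (v.1, 0) + E (0, v.2)).2 = c v.1 + liftL ht a v.2
    rw [Prod.snd_add, key2]
    rfl

end LambdaHelpers

section MainLemmas
set_option linter.unusedSectionVars false
set_option maxHeartbeats 1000000

variable {A M N MN : Type} [Ring A]
  [AddCommGroup M] [Module A M] [Module Aᵐᵒᵖ M] [SMulCommClass A Aᵐᵒᵖ M]
  [AddCommGroup N] [Module A N] [AddCommGroup MN] [Module A MN]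
  {t : M → N → MN}
  [instTN : Module (TrivSqZeroExt A M) (N × MN)]
  (ht : IsTensorProd A M N MN t)
  (hTN : ∀ (q : TrivSqZeroExt A M) (x : N × MN),
      q • x = (q.fst • x.1, q.fst • x.2 + t q.snd x.1))

include ht hTN

omit ht hTN in
private lemma proj_spec (P P' : Submodule A N) (hc : IsCompl P P') :
    ∃ e : N →ₗ[A] N, (∀ n, e n ∈ P) ∧ (∀ p ∈ P, e p = p) ∧ (∀ p ∈ P', e p = 0) := by
  refine ⟨P.subtype ∘ₗ P.projectionOnto P' hc, fun n => Submodule.coe_mem _, ?_, ?_⟩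
  · intro p hp
    have := Submodule.projectionOnto_apply_left hc ⟨p, hp⟩
    simp [this]
  · intro p hp
    have := Submodule.projectionOnto_apply_of_mem_right hc hp
    simp [this]

private lemma SP_isCompl (P P' : Submodule A N) (hc : IsCompl P P') :
    ∃ C, IsCompl (SP hTN P) C := by
  obtain ⟨e, he1, he2, -⟩ := proj_spec P P' hc
  let f' := (TmapL ht hTN e).codRestrict (SP hTN P) (fun v => TmapL_mem ht hTN e P he1 v)
  have hfix : ∀ x : ↥(SP hTN P), f' ↑x = x :=
    fun x => Subtype.ext (TmapL_fix ht hTN e P he2 ↑x x.2)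
  exact ⟨LinearMap.ker f', LinearMap.isCompl_of_proj hfix⟩

private lemma SP_ne_bot (P : Submodule A N) (hP : P ≠ ⊥) : SP hTN P ≠ ⊥ := by
  obtain ⟨n, hn, h0⟩ := (Submodule.ne_bot_iff _).1 hP
  refine (Submodule.ne_bot_iff _).2 ⟨(n, 0), ⟨hn, zero_mem _⟩, ?_⟩
  intro h
  exact h0 (congrArg Prod.fst h)

private lemma P_ne_bot (P : Submodule A N) (hP : SP hTN P ≠ ⊥) : P ≠ ⊥ := by
  intro h
  apply hP
  rw [Submodule.eq_bot_iff]
  rintro ⟨n, x⟩ ⟨h1, h2⟩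
  subst h
  have hx : x ∈ (⊥ : Submodule A MN) := by
    refine Submodule.span_le.2 ?_ h2
    rintro y ⟨m, p, hp, rfl⟩
    have : p = 0 := hp
    simp [this, t_zero_right ht]
  have h1' : n = 0 := h1
  have hx' : x = 0 := hx
  simp [h1', hx']

private lemma SP_iso_of_iso (P Q P' Q' : Submodule A N) (hP : IsCompl P P')
    (hQ : IsCompl Q Q') (f : ↥P ≃ₗ[A] ↥Q) :
    Nonempty (↥(SP hTN P) ≃ₗ[TrivSqZeroExt A M] ↥(SP hTN Q)) := by
  obtain ⟨eP, heP1, heP2, -⟩ := proj_spec P P' hP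
  obtain ⟨eQ, heQ1, heQ2, -⟩ := proj_spec Q Q' hQ
  let g : N →ₗ[A] N := Q.subtype ∘ₗ (f : ↥P →ₗ[A] ↥Q) ∘ₗ (eP.codRestrict P heP1)
  let g' : N →ₗ[A] N := P.subtype ∘ₗ (f.symm : ↥Q →ₗ[A] ↥P) ∘ₗ (eQ.codRestrict Q heQ1)
  have hg : ∀ n, g n ∈ Q := fun n => Submodule.coe_mem _
  have hg' : ∀ n, g' n ∈ P := fun n => Submodule.coe_mem _
  have hgP : ∀ p (hp : p ∈ P), g p = ↑(f ⟨p, hp⟩) := by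
    intro p hp
    have : eP.codRestrict P heP1 p = ⟨p, hp⟩ := Subtype.ext (heP2 p hp)
    simp [g, this]
  have hgQ : ∀ q (hq : q ∈ Q), g' q = ↑(f.symm ⟨q, hq⟩) := by
    intro q hq
    have : eQ.codRestrict Q heQ1 q = ⟨q, hq⟩ := Subtype.ext (heQ2 q hq)
    simp [g', this]
  have hgg' : ∀ p ∈ P, g' (g p) = p := by
    intro p hp
    rw [hgP p hp, hgQ _ (Submodule.coe_mem _)]
    simp
  have hg'g : ∀ q ∈ Q, g (g' q) = q := by
    intro q hq
    rw [hgQ q hq, hgP _ (Submodule.coe_mem _)]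
    simp
  let G : ↥(SP hTN P) →ₗ[TrivSqZeroExt A M] ↥(SP hTN Q) :=
    (TmapL ht hTN g).restrict (fun v hv => TmapL_mem ht hTN g Q hg v)
  let G' : ↥(SP hTN Q) →ₗ[TrivSqZeroExt A M] ↥(SP hTN P) :=
    (TmapL ht hTN g').restrict (fun v hv => TmapL_mem ht hTN g' P hg' v)
  have hGG' : ∀ v : ↥(SP hTN Q), G (G' v) = v := by
    intro v
    refine Subtype.ext ?_
    show TmapL ht hTN g (TmapL ht hTN g' ↑v) = ↑v
    rw [TmapL_apply, TmapL_apply]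
    refine Prod.ext ?_ ?_
    · exact hg'g _ v.2.1
    · show liftL ht g (liftL ht g' (↑v : N × MN).2) = (↑v : N × MN).2
      rw [liftL_lift]
      exact liftL_fix ht (g ∘ₗ g') Q (fun q hq => hg'g q hq) _ v.2.2
  have hG'G : ∀ v : ↥(SP hTN P), G' (G v) = v := by
    intro v
    refine Subtype.ext ?_
    show TmapL ht hTN g' (TmapL ht hTN g ↑v) = ↑v
    rw [TmapL_apply, TmapL_apply]
    refine Prod.ext ?_ ?_
    · exact hgg' _ v.2.1
    · show liftL ht g' (liftL ht g (↑v : N × MN).2) = (↑v : N × MN).2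
      rw [liftL_lift]
      exact liftL_fix ht (g' ∘ₗ g) P (fun p hp => hgg' p hp) _ v.2.2
  exact ⟨LinearEquiv.ofLinear G G' (LinearMap.ext hGG') (LinearMap.ext hG'G)⟩

private lemma zero_first {P Q : Submodule A N}
    (G : ↥(SP hTN Q) ≃ₗ[TrivSqZeroExt A M] ↥(SP hTN P)) :
    ∀ y (hy : y ∈ spanT t Q),
      ((G ⟨((0 : N), y), ⟨zero_mem _, hy⟩⟩ : ↥(SP hTN P)) : N × MN).1 = 0 := by
  intro y hy
  induction hy using Submodule.span_induction with
  | mem x hx =>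
    obtain ⟨m, q, hq, rfl⟩ := hx
    have h1 : (⟨((0 : N), t m q), ⟨zero_mem _, mem_spanT Q m hq⟩⟩ : ↥(SP hTN Q)) =
        (inr m : TrivSqZeroExt A M) • ⟨(q, 0), vP_mem hq⟩ := by
      refine Subtype.ext ?_
      show ((0 : N), t m q) = (inr m : TrivSqZeroExt A M) • ((q, 0) : N × MN)
      rw [inr_smul' hTN]
    rw [h1, map_smul]
    show ((inr m : TrivSqZeroExt A M) • (↑(G ⟨(q, 0), vP_mem hq⟩) : N × MN)).1 = 0
    rw [inr_smul' hTN]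
  | zero =>
    have h1 : (⟨((0 : N), (0 : MN)), ⟨zero_mem _, zero_mem _⟩⟩ : ↥(SP hTN Q)) = 0 :=
      Subtype.ext rfl
    rw [h1, map_zero]
    rfl
  | add u v hu hv ihu ihv =>
    have h1 : (⟨((0 : N), u + v), ⟨zero_mem _, add_mem hu hv⟩⟩ : ↥(SP hTN Q)) =
        ⟨((0 : N), u), ⟨zero_mem _, hu⟩⟩ + ⟨((0 : N), v), ⟨zero_mem _, hv⟩⟩ := by
      refine Subtype.ext ?_
      show ((0 : N), u + v) = (((0 : N), u) + ((0 : N), v) : N × MN)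
      simp
    rw [h1, map_add]
    show ((↑(G _) : N × MN) + (↑(G _) : N × MN)).1 = 0
    rw [Prod.fst_add, ihu, ihv, add_zero]
  | smul r u hu ihu =>
    have h1 : (⟨((0 : N), r • u), ⟨zero_mem _, Submodule.smul_mem _ r hu⟩⟩ : ↥(SP hTN Q)) =
        (inl r : TrivSqZeroExt A M) • ⟨((0 : N), u), ⟨zero_mem _, hu⟩⟩ := by
      refine Subtype.ext ?_
      show ((0 : N), r • u) = (inl r : TrivSqZeroExt A M) • (((0 : N), u) : N × MN)
      rw [inl_smul' ht hTN]
      simp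
    rw [h1, map_smul]
    show ((inl r : TrivSqZeroExt A M) • (↑(G ⟨((0 : N), u), _⟩) : N × MN)).1 = 0
    rw [inl_smul' ht hTN]
    show r • (↑(G ⟨((0 : N), u), ⟨zero_mem _, hu⟩⟩) : N × MN).1 = 0
    rw [ihu, smul_zero]

private lemma cancel_first {P Q : Submodule A N}
    (G : ↥(SP hTN P) ≃ₗ[TrivSqZeroExt A M] ↥(SP hTN Q)) (p : ↥P) :
    ((G.symm ⟨(((G ⟨((p : N), 0), vP_mem p.2⟩ : ↥(SP hTN Q)) : N × MN).1, 0),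
      vP_mem (G _).2.1⟩ : ↥(SP hTN P)) : N × MN).1 = (p : N) := by
  set w := G ⟨((p : N), 0), vP_mem p.2⟩ with hw
  have hw2 : (↑w : N × MN).2 ∈ spanT t Q := w.2.2
  have hsplit : w = ⟨((↑w : N × MN).1, 0), vP_mem w.2.1⟩ +
      ⟨((0 : N), (↑w : N × MN).2), ⟨zero_mem _, hw2⟩⟩ := by
    refine Subtype.ext ?_
    show (↑w : N × MN) = (((↑w : N × MN).1, (0 : MN)) + ((0 : N), (↑w : N × MN).2) : N × MN)
    simp
  have h2 : G.symm w = G.symm ⟨((↑w : N × MN).1, 0), vP_mem w.2.1⟩ +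
      G.symm ⟨((0 : N), (↑w : N × MN).2), ⟨zero_mem _, hw2⟩⟩ := by
    conv_lhs => rw [hsplit]
    rw [map_add]
  have h3 : G.symm w = ⟨((p : N), 0), vP_mem p.2⟩ := by
    rw [hw, LinearEquiv.symm_apply_apply]
  have h4 := congrArg (fun z : ↥(SP hTN P) => ((z : N × MN)).1) (h3.symm.trans h2)
  dsimp only at h4
  rw [Submodule.coe_add, Prod.fst_add,
    zero_first ht hTN G.symm _ hw2, add_zero] at h4
  exact h4.symm

private lemma iso_of_SP_iso (P Q : Submodule A N)
    (F : ↥(SP hTN P) ≃ₗ[TrivSqZeroExt A M] ↥(SP hTN Q)) :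
    Nonempty (↥P ≃ₗ[A] ↥Q) := by
  have vadd : ∀ (R : Submodule A N) (x y : ↥R),
      (⟨((↑(x + y) : N), 0), vP_mem (x + y).2⟩ : ↥(SP hTN R)) =
        ⟨((x : N), 0), vP_mem x.2⟩ + ⟨((y : N), 0), vP_mem y.2⟩ := by
    intro R x y
    refine Subtype.ext ?_
    show ((↑x + ↑y : N), (0 : MN)) = (((x : N), (0 : MN)) + ((y : N), 0) : N × MN)
    simp
  have vsmul : ∀ (R : Submodule A N) (r : A) (x : ↥R),
      (⟨((↑(r • x) : N), 0), vP_mem (r • x).2⟩ : ↥(SP hTN R)) =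
        (inl r : TrivSqZeroExt A M) • ⟨((x : N), 0), vP_mem x.2⟩ := by
    intro R r x
    refine Subtype.ext ?_
    show ((r • ↑x : N), (0 : MN)) = (inl r : TrivSqZeroExt A M) • (((x : N), 0) : N × MN)
    rw [inl_smul' ht hTN]
    simp
  let φ : ↥P →ₗ[A] ↥Q :=
    { toFun := fun p => ⟨((F ⟨((p : N), 0), vP_mem p.2⟩ : ↥(SP hTN Q)) : N × MN).1,
        (F _).2.1⟩
      map_add' := fun x y => by
        refine Subtype.ext ?_
        dsimp only
        rw [vadd, map_add]
        show ((↑(F _) : N × MN) + (↑(F _) : N × MN)).1 = _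
        rw [Prod.fst_add]
        rfl
      map_smul' := fun r x => by
        refine Subtype.ext ?_
        dsimp only [RingHom.id_apply]
        rw [vsmul, map_smul]
        show ((inl r : TrivSqZeroExt A M) • (↑(F _) : N × MN)).1 = _
        rw [inl_smul' ht hTN]
        rfl }
  let ψ : ↥Q →ₗ[A] ↥P :=
    { toFun := fun q => ⟨((F.symm ⟨((q : N), 0), vP_mem q.2⟩ : ↥(SP hTN P)) : N × MN).1,
        (F.symm _).2.1⟩
      map_add' := fun x y => by
        refine Subtype.ext ?_
        dsimp only
        rw [vadd, map_add]
        show ((↑(F.symm _) : N × MN) + (↑(F.symm _) : N × MN)).1 = _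
        rw [Prod.fst_add]
        rfl
      map_smul' := fun r x => by
        refine Subtype.ext ?_
        dsimp only [RingHom.id_apply]
        rw [vsmul, map_smul]
        show ((inl r : TrivSqZeroExt A M) • (↑(F.symm _) : N × MN)).1 = _
        rw [inl_smul' ht hTN]
        rfl }
  refine ⟨LinearEquiv.ofLinear φ ψ ?_ ?_⟩
  · refine LinearMap.ext fun q => Subtype.ext ?_
    show ((F ⟨(((ψ q : ↥P) : N), 0), vP_mem (ψ q).2⟩ : ↥(SP hTN Q)) : N × MN).1 = (q : N)
    exact cancel_first ht hTN F.symm q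
  · refine LinearMap.ext fun p => Subtype.ext ?_
    show ((F.symm ⟨(((φ p : ↥Q) : N), 0), vP_mem (φ p).2⟩ : ↥(SP hTN P)) : N × MN).1 = (p : N)
    exact cancel_first ht hTN F p

/-- If an idempotent `Λ`-endomorphism of `SP P` kills first components of `(n,0)`,
it is zero. -/
private lemma key_vanish (P P' : Submodule A N) (hc : IsCompl P P')
    (G : ↥(SP hTN P) →ₗ[TrivSqZeroExt A M] ↥(SP hTN P))
    (hGG : ∀ w, G (G w) = G w)
    (hGa : ∀ (n : N) (hn : n ∈ P), ((G ⟨(n, 0), vP_mem hn⟩ : ↥(SP hTN P)) : N × MN).1 = 0) :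
    ∀ w, G w = 0 := by
  obtain ⟨e, he1, he2, -⟩ := proj_spec P P' hc
  let f' := (TmapL ht hTN e).codRestrict (SP hTN P) (fun v => TmapL_mem ht hTN e P he1 v)
  have hfix : ∀ x : ↥(SP hTN P), f' ↑x = x :=
    fun x => Subtype.ext (TmapL_fix ht hTN e P he2 ↑x x.2)
  let E : (N × MN) →ₗ[TrivSqZeroExt A M] (N × MN) := (SP hTN P).subtype ∘ₗ G ∘ₗ f'
  obtain ⟨a, c, hE⟩ := endo_decomp ht hTN E
  have hEa : ∀ (n : N), a n = (E (n, 0)).1 := by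
    intro n
    rw [hE]
  have haP : ∀ n ∈ P, a n = 0 := by
    intro n hn
    rw [hEa]
    have h1 : f' (n, 0) = ⟨(n, 0), vP_mem hn⟩ := by
      refine Subtype.ext ?_
      show TmapL ht hTN e (n, 0) = (n, 0)
      exact TmapL_fix ht hTN e P he2 (n, 0) (vP_mem hn)
    show ((SP hTN P).subtype (G (f' (n, 0)))).1 = 0
    rw [h1]
    exact hGa n hn
  intro w
  have hEw : (E ↑w : N × MN) = ↑(G w) := by
    show ((SP hTN P).subtype (G (f' ↑w)) : N × MN) = ↑(G w)
    rw [hfix w]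
    rfl
  -- first component of G w is zero
  have h1 : (↑(G w) : N × MN).1 = 0 := by
    rw [← hEw, hE]
    exact haP _ w.2.1
  -- apply E to G w
  have hEGw : (E ↑(G w) : N × MN) = ↑(G (G w)) := by
    show ((SP hTN P).subtype (G (f' ↑(G w))) : N × MN) = ↑(G (G w))
    rw [hfix (G w)]
    rfl
  have h2 : (↑(G (G w)) : N × MN) = 0 := by
    rw [← hEGw, hE, h1]
    have hc0 : c 0 = 0 := map_zero c
    have ha0 : a 0 = 0 := map_zero a
    have hl : liftL ht a (↑(G w) : N × MN).2 = 0 :=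
      liftL_zero_on ht a P haP _ (G w).2.2
    rw [ha0, hc0, hl]
    simp
  have := hGG w
  rw [← this]
  exact Subtype.ext h2

private lemma SP_indec (P P' : Submodule A N) (hc : IsCompl P P')
    (hP : ∀ p q : Submodule A ↥P, IsCompl p q → p = ⊥ ∨ q = ⊥)
    (p q : Submodule (TrivSqZeroExt A M) ↥(SP hTN P)) (hpq : IsCompl p q) :
    p = ⊥ ∨ q = ⊥ := by
  obtain ⟨e, he1, he2, -⟩ := proj_spec P P' hc
  let f' := (TmapL ht hTN e).codRestrict (SP hTN P) (fun v => TmapL_mem ht hTN e P he1 v)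
  have hfix : ∀ x : ↥(SP hTN P), f' ↑x = x :=
    fun x => Subtype.ext (TmapL_fix ht hTN e P he2 ↑x x.2)
  let G : ↥(SP hTN P) →ₗ[TrivSqZeroExt A M] ↥(SP hTN P) :=
    p.subtype ∘ₗ p.projectionOnto q hpq
  have hGmem : ∀ w, G w ∈ p := fun w => Submodule.coe_mem _
  have hGfix : ∀ w ∈ p, G w = w := by
    intro w hw
    have h : p.projectionOnto q hpq w = ⟨w, hw⟩ :=
      Submodule.projectionOnto_apply_left hpq ⟨w, hw⟩
    show ↑(p.projectionOnto q hpq w) = w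
    rw [h]
  have hGG : ∀ w, G (G w) = G w := fun w => hGfix _ (hGmem w)
  let E : (N × MN) →ₗ[TrivSqZeroExt A M] (N × MN) := (SP hTN P).subtype ∘ₗ G ∘ₗ f'
  obtain ⟨a, c, hE⟩ := endo_decomp ht hTN E
  have hf'vp : ∀ (n : N) (hn : n ∈ P), f' (n, 0) = ⟨(n, 0), vP_mem hn⟩ := by
    intro n hn
    refine Subtype.ext ?_
    show TmapL ht hTN e (n, 0) = (n, 0)
    exact TmapL_fix ht hTN e P he2 (n, 0) (vP_mem hn)
  have hEvp : ∀ (n : N) (hn : n ∈ P),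
      (E (n, 0) : N × MN) = ↑(G ⟨(n, 0), vP_mem hn⟩) := by
    intro n hn
    show ((SP hTN P).subtype (G (f' (n, 0))) : N × MN) = _
    rw [hf'vp n hn]
    rfl
  have haG : ∀ (n : N) (hn : n ∈ P),
      a n = (↑(G ⟨(n, 0), vP_mem hn⟩) : N × MN).1 := by
    intro n hn
    rw [← hEvp n hn, hE]
  have haP : ∀ n ∈ P, a n ∈ P := by
    intro n hn
    rw [haG n hn]
    exact (G ⟨(n, 0), vP_mem hn⟩).2.1
  have hEE : ∀ w : ↥(SP hTN P), (E ↑w : N × MN) = ↑(G w) := by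
    intro w
    show ((SP hTN P).subtype (G (f' ↑w)) : N × MN) = _
    rw [hfix w]
    rfl
  have haa : ∀ n ∈ P, a (a n) = a n := by
    intro n hn
    have e1 : (E (n, 0) : N × MN) = ↑(G ⟨(n, 0), vP_mem hn⟩) := hEvp n hn
    have h1 : E (E (n, 0)) = E (n, 0) := by
      rw [e1, hEE, hGG, ← e1]
    have h2 := congrArg Prod.fst h1
    rw [hE (n, 0), hE] at h2
    exact h2
  let a' : ↥P →ₗ[A] ↥P := a.restrict (p := P) (q := P) (fun x hx => haP x hx)
  have ha'2 : ∀ x : ↥P, a' (a' x) = a' x := fun x => Subtype.ext (haa _ x.2)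
  rcases idem_trivial hP a' ha'2 with h0 | h1
  · left
    have hGa : ∀ (n : N) (hn : n ∈ P),
        ((G ⟨(n, 0), vP_mem hn⟩ : ↥(SP hTN P)) : N × MN).1 = 0 := by
      intro n hn
      rw [← haG n hn]
      exact congrArg Subtype.val (h0 ⟨n, hn⟩)
    have hG0 := key_vanish ht hTN P P' hc G hGG hGa
    rw [Submodule.eq_bot_iff]
    intro w hw
    rw [← hGfix w hw, hG0]
  · right
    let G2 : ↥(SP hTN P) →ₗ[TrivSqZeroExt A M] ↥(SP hTN P) :=
      q.subtype ∘ₗ q.projectionOnto p hpq.symm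
    have hG2mem : ∀ w, G2 w ∈ q := fun w => Submodule.coe_mem _
    have hG2fix : ∀ w ∈ q, G2 w = w := by
      intro w hw
      have h : q.projectionOnto p hpq.symm w = ⟨w, hw⟩ :=
        Submodule.projectionOnto_apply_left hpq.symm ⟨w, hw⟩
      show ↑(q.projectionOnto p hpq.symm w) = w
      rw [h]
    have hG2G2 : ∀ w, G2 (G2 w) = G2 w := fun w => hG2fix _ (hG2mem w)
    have hsum : ∀ w : ↥(SP hTN P), (↑(G w) : N × MN) + ↑(G2 w) = ↑w := by
      intro w
      have := Submodule.projection_add_projection_eq_self hpq w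
      exact_mod_cast congrArg Subtype.val this
    have hG2a : ∀ (n : N) (hn : n ∈ P),
        ((G2 ⟨(n, 0), vP_mem hn⟩ : ↥(SP hTN P)) : N × MN).1 = 0 := by
      intro n hn
      have hs := congrArg Prod.fst (hsum ⟨(n, 0), vP_mem hn⟩)
      rw [Prod.fst_add] at hs
      have h2 : a n = n := congrArg Subtype.val (h1 ⟨n, hn⟩)
      rw [← haG n hn, h2] at hs
      have hs2 : n + (↑(G2 ⟨(n, 0), vP_mem hn⟩) : N × MN).1 = n + 0 := by
        rw [add_zero]; exact hs
      exact add_left_cancel hs2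
    have hG20 := key_vanish ht hTN P P' hc G2 hG2G2 hG2a
    rw [Submodule.eq_bot_iff]
    intro w hw
    rw [← hG2fix w hw, hG20]

private lemma P_indec_of_SP (P P' : Submodule A N) (hc : IsCompl P P')
    (hSP : ∀ p q : Submodule (TrivSqZeroExt A M) ↥(SP hTN P), IsCompl p q → p = ⊥ ∨ q = ⊥)
    (p q : Submodule A ↥P) (hpq : IsCompl p q) : p = ⊥ ∨ q = ⊥ := by
  obtain ⟨e, he1, he2, -⟩ := proj_spec P P' hc
  let ep : N →ₗ[A] N :=
    P.subtype ∘ₗ p.subtype ∘ₗ (p.projectionOnto q hpq) ∘ₗ (e.codRestrict P he1)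
  have hep1 : ∀ n, ep n ∈ P := fun n => Submodule.coe_mem _
  have hepP : ∀ x : ↥P,
      ep ↑x = ↑((↑(p.projectionOnto q hpq x) : ↥P)) := by
    intro x
    have h1 : e.codRestrict P he1 ↑x = x := Subtype.ext (he2 ↑x x.2)
    show ((((p.projectionOnto q hpq (e.codRestrict P he1 ↑x)) : ↥P) : N)) =
      (((p.projectionOnto q hpq x : ↥P) : N))
    rw [h1]
  have hepp : ∀ n, ep (ep n) = ep n := by
    intro n
    set u := p.projectionOnto q hpq (e.codRestrict P he1 n) with hudef
    show ep ↑((u : ↥P)) = ↑((u : ↥P))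
    rw [hepP ((u : ↥P)), Submodule.projectionOnto_apply_left hpq u]
  let G := (TmapL ht hTN ep).restrict (p := SP hTN P) (q := SP hTN P)
    (fun v hv => TmapL_mem ht hTN ep P hep1 v)
  have hGval : ∀ w : ↥(SP hTN P), (↑(G w) : N × MN) = TmapL ht hTN ep ↑w := fun w => rfl
  have hGG : ∀ w, G (G w) = G w := by
    intro w
    refine Subtype.ext ?_
    rw [hGval, hGval, TmapL_apply, TmapL_apply]
    refine Prod.ext (hepp _) ?_
    show liftL ht ep (liftL ht ep (↑w : N × MN).2) = liftL ht ep (↑w : N × MN).2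
    rw [liftL_lift]
    exact liftL_congr ht (ep ∘ₗ ep) ep (fun n => hepp n) _
  have hepfix : ∀ (x : ↥P), x ∈ p → ep ↑x = ↑x := by
    intro x hx
    rw [hepP x, Submodule.projectionOnto_apply_left hpq ⟨x, hx⟩]
  have hepkill : ∀ (x : ↥P), x ∈ q → ep ↑x = 0 := by
    intro x hx
    rw [hepP x, Submodule.projectionOnto_apply_of_mem_right hpq hx]
    rfl
  rcases hSP (LinearMap.range G) (LinearMap.ker G) (idem_isCompl G hGG) with h | h
  · left
    rw [Submodule.eq_bot_iff]
    intro x hx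
    have h1 : G ⟨(↑x, 0), vP_mem x.2⟩ ∈ LinearMap.range G := ⟨_, rfl⟩
    rw [h] at h1
    have h1' : G ⟨(↑x, 0), vP_mem x.2⟩ = 0 := (Submodule.mem_bot _).1 h1
    have h2 := congrArg (fun z : ↥(SP hTN P) => (↑z : N × MN).1) h1'
    have h3 : ep ↑x = 0 := h2
    rw [hepfix x hx] at h3
    exact Subtype.ext h3
  · right
    rw [Submodule.eq_bot_iff]
    intro x hx
    have h1 : G ⟨(↑x, 0), vP_mem x.2⟩ = 0 := by
      refine Subtype.ext ?_
      rw [hGval, TmapL_apply]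
      refine Prod.ext ?_ ?_
      · exact hepkill x hx
      · show liftL ht ep (0 : MN) = (0 : N × MN).2
        rw [map_zero]
        rfl
    have h2 : (⟨(↑x, 0), vP_mem x.2⟩ : ↥(SP hTN P)) ∈ LinearMap.ker G := h1
    rw [h] at h2
    have h3 : (⟨(↑x, 0), vP_mem x.2⟩ : ↥(SP hTN P)) = 0 := (Submodule.mem_bot _).1 h2
    have h4 := congrArg (fun z : ↥(SP hTN P) => (↑z : N × MN).1) h3
    exact Subtype.ext h4

private lemma exists_SP (X X' : Submodule (TrivSqZeroExt A M) (N × MN))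
    (hXc : IsCompl X X') :
    ∃ (P P' : Submodule A N), IsCompl P P' ∧
      Nonempty (↥X ≃ₗ[TrivSqZeroExt A M] ↥(SP hTN P)) := by
  let E : (N × MN) →ₗ[TrivSqZeroExt A M] (N × MN) :=
    X.subtype ∘ₗ X.projectionOnto X' hXc
  have hEmem : ∀ v, E v ∈ X := fun v => Submodule.coe_mem _
  have hEfix : ∀ v ∈ X, E v = v := by
    intro v hv
    show ↑(X.projectionOnto X' hXc v) = v
    rw [Submodule.projectionOnto_apply_left hXc ⟨v, hv⟩]
  have hEE : ∀ v, E (E v) = E v := fun v => hEfix _ (hEmem v)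
  obtain ⟨a, c, hE⟩ := endo_decomp ht hTN E
  have hE0 : ∀ n : N, E (n, 0) = (a n, c n) := by
    intro n
    rw [hE]
    simp
  have haa : ∀ n, a (a n) = a n := by
    intro n
    have h1 := hEE (n, 0)
    rw [hE0, hE] at h1
    exact congrArg Prod.fst h1
  have hrel : ∀ n, c (a n) + liftL ht a (c n) = c n := by
    intro n
    have h1 := hEE (n, 0)
    rw [hE0, hE] at h1
    exact congrArg Prod.snd h1
  set P := LinearMap.range a with hPdef
  have haP : ∀ n, a n ∈ P := fun n => ⟨n, rfl⟩
  have haPfix : ∀ x ∈ P, a x = x := by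
    rintro x ⟨n, rfl⟩
    exact haa n
  refine ⟨P, LinearMap.ker a, idem_isCompl a haa, ?_⟩
  -- liftL a kills c ∘ a
  have hLca : ∀ n, liftL ht a (c (a n)) = 0 := by
    intro n
    have h2 := congrArg (liftL ht a) (hrel n)
    rw [map_add, liftL_lift] at h2
    rw [liftL_congr ht (a ∘ₗ a) a (fun m => haa m) (c n)] at h2
    have h3 : liftL ht a (c (a n)) + liftL ht a (c n) =
        0 + liftL ht a (c n) := by rw [zero_add]; exact h2
    exact add_right_cancel h3
  -- the unipotent automorphism
  have hLL : ∀ x, liftL ht a (liftL ht a x) = liftL ht a x := fun x => by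
    rw [liftL_lift]; exact liftL_congr ht (a ∘ₗ a) a (fun m => haa m) x
  let σ : N →ₗ[A] MN := (liftL ht a ∘ₗ c) + (liftL ht a ∘ₗ c) - c
  have hσ : ∀ x, σ x = liftL ht a (c x) + liftL ht a (c x) - c x := fun x => rfl
  let w : (N × MN) →ₗ[TrivSqZeroExt A M] (N × MN) :=
    { toFun := fun v => (0, σ v.1)
      map_add' := fun u v => by
        refine Prod.ext ?_ ?_
        · show (0 : N) = 0 + 0
          rw [add_zero]
        · show σ (u.1 + v.1) = σ u.1 + σ v.1
          rw [map_add]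
      map_smul' := fun s v => by
        dsimp only [RingHom.id_apply]
        rw [hTN s v, hTN s ((0 : N), σ v.1)]
        refine Prod.ext ?_ ?_
        · show (0 : N) = s.fst • (0 : N)
          rw [smul_zero]
        · show σ (s.fst • v.1) = s.fst • σ v.1 + t s.snd 0
          rw [t_zero_right ht, add_zero, map_smul] }
  have hww : ∀ v, w (w v) = 0 := by
    intro v
    show ((0 : N), σ (0 : N)) = (0 : N × MN)
    rw [map_zero]
    rfl
  have hcomm : ∀ v, (E v) + w (E v) = TmapL ht hTN a (v + w v) := by
    intro v
    rw [hE v, TmapL_apply]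
    refine Prod.ext ?_ ?_
    · show a v.1 + 0 = a (v.1 + 0)
      rw [add_zero, add_zero]
    · show (c v.1 + liftL ht a v.2) + σ (a v.1) = liftL ht a (v.2 + σ v.1)
      have hca : c (a v.1) = c v.1 - liftL ht a (c v.1) := eq_sub_of_add_eq (hrel v.1)
      rw [hσ (a v.1), hσ v.1, hLca v.1, hca, map_add, map_sub, map_add, hLL]
      abel
  let idw : (N × MN) →ₗ[TrivSqZeroExt A M] (N × MN) := LinearMap.id + w
  let idw' : (N × MN) →ₗ[TrivSqZeroExt A M] (N × MN) := LinearMap.id - w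
  have h1 : idw ∘ₗ idw' = LinearMap.id := by
    refine LinearMap.ext fun v => ?_
    show (v - w v) + w (v - w v) = v
    rw [map_sub, hww]
    abel
  have h2 : idw' ∘ₗ idw = LinearMap.id := by
    refine LinearMap.ext fun v => ?_
    show (v + w v) - w (v + w v) = v
    rw [map_add, hww]
    abel
  let u : (N × MN) ≃ₗ[TrivSqZeroExt A M] (N × MN) := LinearEquiv.ofLinear idw idw' h1 h2
  have hX : X = LinearMap.range E := by
    apply le_antisymm
    · intro v hv
      exact ⟨v, hEfix v hv⟩
    · rintro v ⟨x, rfl⟩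
      exact hEmem x
  have hrange : LinearMap.range (TmapL ht hTN a) = SP hTN P := by
    apply le_antisymm
    · rintro v ⟨x, rfl⟩
      exact TmapL_mem ht hTN a P haP x
    · intro v hv
      exact ⟨v, TmapL_fix ht hTN a P haPfix v hv⟩
  have hmap : Submodule.map (u : (N × MN) →ₗ[TrivSqZeroExt A M] (N × MN)) X = SP hTN P := by
    rw [hX, ← LinearMap.range_comp]
    have hcomp : (u : (N × MN) →ₗ[TrivSqZeroExt A M] (N × MN)) ∘ₗ E =
        TmapL ht hTN a ∘ₗ (u : (N × MN) →ₗ[TrivSqZeroExt A M] (N × MN)) := by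
      refine LinearMap.ext fun v => ?_
      show E v + w (E v) = TmapL ht hTN a (v + w v)
      exact hcomm v
    rw [hcomp, LinearMap.range_comp_of_range_eq_top _ (LinearEquiv.range u), hrange]
  exact ⟨(u.submoduleMap X).trans (LinearEquiv.ofEq _ _ hmap)⟩

end MainLemmas

section Core
set_option linter.unusedSectionVars false
set_option maxHeartbeats 1000000

private theorem core_count (A M N MN : Type) [Ring A]
    [AddCommGroup M] [Module A M] [Module Aᵐᵒᵖ M] [SMulCommClass A Aᵐᵒᵖ M]
    [AddCommGroup N] [Module A N] [AddCommGroup MN] [Module A MN]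
    (t : M → N → MN) (ht : IsTensorProd A M N MN t)
    [instTN : Module (TrivSqZeroExt A M) (N × MN)]
    (hTN : ∀ (q : TrivSqZeroExt A M) (x : N × MN),
      q • x = (q.fst • x.1, q.fst • x.2 + t q.snd x.1)) :
    numIndecSummands (TrivSqZeroExt A M) (N × MN) instTN =
      numIndecSummands A N inferInstance := by
  -- the subtype on the A side
  let SubA := {P : Submodule A N //
      (∃ P' : Submodule A N, IsCompl P P') ∧ P ≠ ⊥ ∧
      ∀ p q : Submodule A ↥P, IsCompl p q → p = ⊥ ∨ q = ⊥}
  let SubL := {P : Submodule (TrivSqZeroExt A M) (N × MN) //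
      (∃ P' : Submodule (TrivSqZeroExt A M) (N × MN), IsCompl P P') ∧ P ≠ ⊥ ∧
      ∀ p q : Submodule (TrivSqZeroExt A M) ↥P, IsCompl p q → p = ⊥ ∨ q = ⊥}
  let rA : SubA → SubA → Prop := fun P Q => Nonempty (↥P.1 ≃ₗ[A] ↥Q.1)
  let rL : SubL → SubL → Prop :=
    fun P Q => Nonempty (↥P.1 ≃ₗ[TrivSqZeroExt A M] ↥Q.1)
  let Φ : SubA → SubL := fun P =>
    ⟨SP hTN P.1,
      SP_isCompl ht hTN P.1 P.2.1.choose P.2.1.choose_spec,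
      SP_ne_bot ht hTN P.1 P.2.2.1,
      SP_indec ht hTN P.1 P.2.1.choose P.2.1.choose_spec P.2.2.2⟩
  let F : Quot rA → Quot rL := Quot.map Φ (fun P Q h =>
    h.elim fun f =>
      SP_iso_of_iso ht hTN P.1 Q.1 P.2.1.choose Q.2.1.choose
        P.2.1.choose_spec Q.2.1.choose_spec f)
  have hrLequiv : Equivalence rL :=
    ⟨fun x => ⟨LinearEquiv.refl _ _⟩, fun ⟨e⟩ => ⟨e.symm⟩, fun ⟨e⟩ ⟨f⟩ => ⟨e.trans f⟩⟩
  have hsurj : Function.Surjective F := by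
    apply Quot.ind
    intro X
    obtain ⟨P, P', hPc, ⟨G⟩⟩ :=
      exists_SP ht hTN X.1 X.2.1.choose X.2.1.choose_spec
    have hSPindec : ∀ p q : Submodule (TrivSqZeroExt A M) ↥(SP hTN P),
        IsCompl p q → p = ⊥ ∨ q = ⊥ := indec_transfer G X.2.2.2
    have hSPne : SP hTN P ≠ ⊥ := nebot_transfer G X.2.2.1
    refine ⟨Quot.mk rA ⟨P, ⟨P', hPc⟩, P_ne_bot ht hTN P hSPne,
      P_indec_of_SP ht hTN P P' hPc hSPindec⟩, ?_⟩
    exact Quot.sound ⟨G.symm⟩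
  have hinj : ∀ q1 q2, F q1 = F q2 → q1 = q2 := by
    apply Quot.ind
    intro P
    apply Quot.ind
    intro Q
    intro h
    have h2 : rL (Φ P) (Φ Q) := hrLequiv.eqvGen_iff.1 (Quot.eq.1 h)
    obtain ⟨G⟩ := h2
    exact Quot.sound (iso_of_SP_iso ht hTN P.1 Q.1 G)
  exact ((Nat.card_eq_of_bijective F ⟨fun {a b} => hinj a b, hsurj⟩).symm :)

private lemma numIndec_congr {R V W : Type} [Ring R] [AddCommGroup V] [AddCommGroup W]
    [iV : Module R V] [iW : Module R W] (e : V ≃ₗ[R] W) :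
    numIndecSummands R V iV = numIndecSummands R W iW := by
  let SubV := {P : Submodule R V //
      (∃ P' : Submodule R V, IsCompl P P') ∧ P ≠ ⊥ ∧
      ∀ p q : Submodule R ↥P, IsCompl p q → p = ⊥ ∨ q = ⊥}
  let SubW := {P : Submodule R W //
      (∃ P' : Submodule R W, IsCompl P P') ∧ P ≠ ⊥ ∧
      ∀ p q : Submodule R ↥P, IsCompl p q → p = ⊥ ∨ q = ⊥}
  let rV : SubV → SubV → Prop := fun P Q => Nonempty (↥P.1 ≃ₗ[R] ↥Q.1)
  let rW : SubW → SubW → Prop := fun P Q => Nonempty (↥P.1 ≃ₗ[R] ↥Q.1)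
  have transfer : ∀ (V' W' : Type) [AddCommGroup V'] [AddCommGroup W']
      [Module R V'] [Module R W'] (e : V' ≃ₗ[R] W') (P : Submodule R V'),
      ((∃ P' : Submodule R V', IsCompl P P') ∧ P ≠ ⊥ ∧
        (∀ p q : Submodule R ↥P, IsCompl p q → p = ⊥ ∨ q = ⊥)) →
      ((∃ Q' : Submodule R W', IsCompl (P.map (e : V' →ₗ[R] W')) Q') ∧
        P.map (e : V' →ₗ[R] W') ≠ ⊥ ∧
        (∀ p q : Submodule R ↥(P.map (e : V' →ₗ[R] W')), IsCompl p q → p = ⊥ ∨ q = ⊥)) := by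
    intro V' W' _ _ _ _ e P hP
    obtain ⟨⟨P', hc⟩, hne, hindec⟩ := hP
    refine ⟨⟨P'.map (e : V' →ₗ[R] W'),
      (Submodule.orderIsoMapComap e).isCompl hc⟩, ?_, ?_⟩
    · intro h
      apply hne
      rw [Submodule.eq_bot_iff] at h ⊢
      intro x hx
      have := h (e x) ⟨x, hx, rfl⟩
      have hx0 : e x = 0 := this
      rw [LinearEquiv.map_eq_zero_iff] at hx0
      exact hx0
    · exact indec_transfer (e.submoduleMap P) hindec
  let Φ : SubV → SubW := fun P => ⟨P.1.map (e : V →ₗ[R] W), transfer V W e P.1 P.2⟩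
  let Ψ : SubW → SubV := fun P => ⟨P.1.map (e.symm : W →ₗ[R] V), transfer W V e.symm P.1 P.2⟩
  have hmapmap : ∀ P : Submodule R V, (P.map (e : V →ₗ[R] W)).map (e.symm : W →ₗ[R] V) = P := by
    intro P
    ext x
    constructor
    · rintro ⟨y, ⟨z, hz, rfl⟩, rfl⟩
      simpa using hz
    · intro hx
      exact ⟨e x, ⟨x, hx, rfl⟩, by simp⟩
  have hmapmap' : ∀ P : Submodule R W, (P.map (e.symm : W →ₗ[R] V)).map (e : V →ₗ[R] W) = P := by
    intro P
    ext x
    constructor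
    · rintro ⟨y, ⟨z, hz, rfl⟩, rfl⟩
      simpa using hz
    · intro hx
      exact ⟨e.symm x, ⟨x, hx, rfl⟩, by simp⟩
  let F : Quot rV → Quot rW := Quot.map Φ (fun P Q h =>
    h.elim fun f =>
      ⟨((e.submoduleMap P.1).symm.trans f).trans (e.submoduleMap Q.1)⟩)
  let G : Quot rW → Quot rV := Quot.map Ψ (fun P Q h =>
    h.elim fun f =>
      ⟨((e.symm.submoduleMap P.1).symm.trans f).trans (e.symm.submoduleMap Q.1)⟩)
  have hGF : ∀ q, G (F q) = q := by
    apply Quot.ind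
    intro P
    show Quot.mk rV (Ψ (Φ P)) = Quot.mk rV P
    congr 1
    exact Subtype.ext (hmapmap P.1)
  have hFG : ∀ q, F (G q) = q := by
    apply Quot.ind
    intro P
    show Quot.mk rW (Φ (Ψ P)) = Quot.mk rW P
    congr 1
    exact Subtype.ext (hmapmap' P.1)
  exact Nat.card_eq_of_bijective F
    (Function.bijective_iff_has_inverse.2 ⟨G, hGF, hFG⟩)

end Core

/-- Let `A` be a finite dimensional algebra over a field `K`, `M` a
finite dimensional `A`-bimodule, and `Λ = A ⋉ M` the trivial extension. For any
finite dimensional `A`-module `N`, the number of pairwise non-isomorphic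
indecomposable direct summands of `T(N)` equals that of `N`. In particular, `Λ`
and `A` have the same number of non-isomorphic indecomposable projective modules
(indecomposable direct summands of the regular module). -/
theorem summand_count_T (K A M N MN : Type) [Field K] [Ring A] [Algebra K A]
    [FiniteDimensional K A]
    [AddCommGroup M] [Module A M] [Module Aᵐᵒᵖ M] [SMulCommClass A Aᵐᵒᵖ M]
    [Module K M] [FiniteDimensional K M]
    [AddCommGroup N] [Module A N] [Module K N] [IsScalarTower K A N]
    [FiniteDimensional K N]
    [AddCommGroup MN] [Module A MN] [Module K MN] [FiniteDimensional K MN]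
    (t : M → N → MN) (ht : IsTensorProd A M N MN t)
    [instTN : Module (TrivSqZeroExt A M) (N × MN)]
    (hTN : ∀ (q : TrivSqZeroExt A M) (x : N × MN),
      q • x = (q.fst • x.1, q.fst • x.2 + t q.snd x.1)) :
    numIndecSummands (TrivSqZeroExt A M) (N × MN) instTN =
      numIndecSummands A N inferInstance ∧
    numIndecSummands (TrivSqZeroExt A M) (TrivSqZeroExt A M) inferInstance =
      numIndecSummands A A inferInstance := by
  constructor
  · exact core_count A M N MN t ht hTN
  · -- model `Λ` itself as `T(A)` with `M = M ⊗ A`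
    letI inst2 : Module (TrivSqZeroExt A M) (A × M) :=
      inferInstanceAs (Module (TrivSqZeroExt A M) (TrivSqZeroExt A M))
    set t2 : M → A → M := fun m a => op a • m with ht2def
    have ht2 : IsTensorProd A M A M t2 := by
      refine ⟨fun m m' a => smul_add _ _ _, fun m a a' => ?_, fun r m a => ?_,
        fun r m a => ?_, ?_⟩
      · show op (a + a') • m = op a • m + op a' • m
        rw [op_add, add_smul]
      · show op a • (op r • m) = op (r • a) • m
        rw [smul_eq_mul, op_mul, mul_smul]
      · show op a • (r • m) = r • (op a • m)
        exact (smul_comm r (op a) m).symm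
      · intro P _ g hadd1 hadd2 hbal
        have hg0 : g 0 1 = 0 := by
          have := hadd1 0 0 1
          rw [add_zero] at this
          have h2 : g 0 1 + 0 = g 0 1 + g 0 1 := by rw [add_zero]; exact this
          exact (add_left_cancel h2).symm
        let h0 : M →+ P :=
          { toFun := fun m => g m 1
            map_zero' := hg0
            map_add' := fun m m' => hadd1 m m' 1 }
        refine ⟨h0, fun m a => ?_, fun h' hh' => ?_⟩
        · show g (op a • m) 1 = g m a
          rw [hbal a m 1]
          have : a • (1 : A) = a := by rw [smul_eq_mul, mul_one]
          rw [this]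
        · refine AddMonoidHom.ext fun m => ?_
          have h1 : t2 m 1 = m := by
            show op (1 : A) • m = m
            rw [op_one, one_smul]
          have := hh' m 1
          rw [h1] at this
          rw [this]
          rfl
    have hTN2 : ∀ (q : TrivSqZeroExt A M) (x : A × M),
        q • x = (q.fst • x.1, q.fst • x.2 + t2 q.snd x.1) := by
      intro q x
      have hmul : q • x = q * (show TrivSqZeroExt A M from x) := rfl
      rw [hmul]
      refine Prod.ext ?_ ?_
      · show (q * (show TrivSqZeroExt A M from x)).fst = q.fst • x.1
        rw [fst_mul]
        rfl
      · show (q * (show TrivSqZeroExt A M from x)).snd = q.fst • x.2 + t2 q.snd x.1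
        rw [snd_mul]
        rfl
    have h2 : numIndecSummands (TrivSqZeroExt A M) (A × M) inst2 =
        numIndecSummands A A inferInstance :=
      core_count A M A M t2 ht2 hTN2
    have h3 : numIndecSummands (TrivSqZeroExt A M) (TrivSqZeroExt A M) inferInstance =
        numIndecSummands (TrivSqZeroExt A M) (A × M) inst2 := by
      refine numIndec_congr ?_
      exact { toFun := fun x => x, invFun := fun x => x,
              map_add' := fun _ _ => rfl, map_smul' := fun _ _ => rfl,
              left_inv := fun _ => rfl, right_inv := fun _ => rfl }
    rw [h3, h2]
end
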